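/- Let T be a triangulated category with coproducts and G a compact generator with Hom(G, G[i]) = 0 for all i ≥ 2. Let S be the class of objects F such that there exists a distinguished triangle E → F → D with E ∈ C⁰ (the smallest full subcategory containing G, closed under finite extensions, coproducts, and summands) and Hom(G[j], D) = 0 for all j ≥ -1. Then S is closed under extensions: if F₂[-1] → F₁ → F is a distinguished triangle with F₁, F₂ ∈ S, then F ∈ S. -/

import Mathlib

open CategoryTheory CategoryTheory.Limits CategoryTheory.Pretriangulated

universe w v u

section Compact

variable {T : Type u} [Category.{v} T] [Preadditive T]

/-- The canonical comparison map `⨁ᵢ Hom(C, Xᵢ) →+ Hom(C, ∐ᵢ Xᵢ)`. -/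
noncomputable def compactComparison (C : T) {ι : Type w} [DecidableEq ι] (X : ι → T)
    [HasCoproduct X] : (DirectSum ι fun i => (C ⟶ X i)) →+ (C ⟶ ∐ X) :=
  DirectSum.toAddMonoid fun i => Preadditive.rightComp C (Sigma.ι X i)

/-- An object `C` is compact if for every small family `X` whose coproduct exists, the canonical
map `⨁ᵢ Hom(C, Xᵢ) → Hom(C, ∐ᵢ Xᵢ)` is an isomorphism (i.e. bijective). -/
def IsCompactObject (C : T) : Prop :=
  ∀ (ι : Type w) [DecidableEq ι] (X : ι → T) [HasCoproduct X],
    Function.Bijective (compactComparison C X)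

end Compact

variable {T : Type u} [Category.{v} T] [Preadditive T] [HasZeroObject T] [HasShift T ℤ]
  [∀ n : ℤ, (shiftFunctor T n).Additive] [Pretriangulated T]
variable [HasCoproducts.{v} T] [HasBinaryBiproducts T]

/-- `C⁰ = Smr(Coprod(G[0,0]))`: the smallest strictly full subcategory containing `G`, closed
under extensions, small coproducts and direct summands. -/
def coprodZero (G : T) : Set T :=
  ⋂₀ {S : Set T |
    G ∈ S ∧
    (∀ X Y : T, X ∈ S → (X ≅ Y) → Y ∈ S) ∧
    (∀ Tr : Triangle T, Tr ∈ (distTriang T) → Tr.obj₁ ∈ S → Tr.obj₃ ∈ S → Tr.obj₂ ∈ S) ∧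
    (∀ (ι : Type v) (X : ι → T), (∀ i, X i ∈ S) → (∐ X) ∈ S) ∧
    (∀ X Y : T, (X ⊞ Y) ∈ S → X ∈ S)}

/-- The class `S` of objects `F` admitting a distinguished triangle `E ⟶ F ⟶ D` with
`E ∈ C⁰` and `Hom(G[j], D) = 0` for all `j ≥ -1`. -/
def approxClass (G : T) : Set T :=
  {F : T | ∃ (E D : T) (f : E ⟶ F) (g : F ⟶ D) (h : D ⟶ E⟦(1 : ℤ)⟧),
    Triangle.mk f g h ∈ (distTriang T) ∧ E ∈ coprodZero G ∧
    (∀ j : ℤ, -1 ≤ j → ∀ φ : G⟦j⟧ ⟶ D, φ = 0)}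

/-- Vanishing transports along isomorphisms of the target. -/
lemma vanOfIso {G D D' : T} (v : ∀ j : ℤ, -1 ≤ j → ∀ φ : G⟦j⟧ ⟶ D, φ = 0)
    (e : D' ≅ D) (j : ℤ) (hj : -1 ≤ j) (φ : G⟦j⟧ ⟶ D') : φ = 0 := by
  have h0 : φ ≫ e.hom = 0 := v j hj _
  have h1 : φ = (φ ≫ e.hom) ≫ e.inv := by simp
  rw [h1, h0, zero_comp]

/-- The vanishing condition against `D` extends from `G` to all of `C⁰`. -/
lemma coprodZeroVan {G D : T} (v : ∀ j : ℤ, -1 ≤ j → ∀ φ : G⟦j⟧ ⟶ D, φ = 0)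
    {X : T} (hX : X ∈ coprodZero G) :
    ∀ j : ℤ, -1 ≤ j → ∀ φ : X⟦j⟧ ⟶ D, φ = 0 := by
  refine hX {Y | ∀ j : ℤ, -1 ≤ j → ∀ φ : Y⟦j⟧ ⟶ D, φ = 0} ⟨v, ?_, ?_, ?_, ?_⟩
  · intro X Y hXv e j hj φ
    have h0 : (shiftFunctor T j).map e.hom ≫ φ = 0 := hXv j hj _
    have h1 : φ = (shiftFunctor T j).map e.inv ≫ (shiftFunctor T j).map e.hom ≫ φ := by
      rw [← Functor.map_comp_assoc, e.inv_hom_id, CategoryTheory.Functor.map_id, Category.id_comp]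
    rw [h1, h0, Limits.comp_zero]
  · intro Tr hTrd h1 h3 j hj φ
    obtain ⟨g, hg⟩ := Triangle.yoneda_exact₂ _ (Triangle.shift_distinguished Tr hTrd j) φ
      (h1 j hj _)
    rw [hg, show g = 0 from h3 j hj g]
    exact Limits.comp_zero
  · intro ι X hXi j hj φ
    have hc := isColimitOfPreserves (shiftFunctor T j) (colimit.isColimit (Discrete.functor X))
    apply hc.hom_ext
    rintro ⟨i⟩
    rw [Limits.comp_zero]
    exact hXi i j hj _
  · intro X Y hXY j hj φ
    have h0 : (shiftFunctor T j).map (biprod.fst : X ⊞ Y ⟶ X) ≫ φ = 0 := hXY j hj _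
    have h1 : φ = (shiftFunctor T j).map (biprod.inl : X ⟶ X ⊞ Y) ≫
        (shiftFunctor T j).map (biprod.fst : X ⊞ Y ⟶ X) ≫ φ := by
      rw [← Functor.map_comp_assoc, biprod.inl_fst, CategoryTheory.Functor.map_id, Category.id_comp]
    rw [h1, h0, Limits.comp_zero]

/-- If `G` is a compact object with `Hom(G, G[i]) = 0` for `i ≥ 2`, then the class `S` above is
closed under extensions: for any distinguished triangle `F₂[-1] ⟶ F₁ ⟶ F` with `F₁, F₂ ∈ S`,
also `F ∈ S`. -/
theorem stmt13 (G : T) (hG : IsCompactObject.{v} G)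
    (hvan : ∀ i : ℤ, 2 ≤ i → ∀ f : G ⟶ G⟦i⟧, f = 0)
    (F F₁ F₂ : T) (f : F₂⟦(-1 : ℤ)⟧ ⟶ F₁) (g : F₁ ⟶ F)
    (h : F ⟶ (F₂⟦(-1 : ℤ)⟧)⟦(1 : ℤ)⟧)
    (hTr : Triangle.mk f g h ∈ (distTriang T))
    (h₁ : F₁ ∈ approxClass G) (h₂ : F₂ ∈ approxClass G) :
    F ∈ approxClass G := by
  obtain ⟨E₁, D₁, a₁, b₁, c₁, hT₁, hE₁, v₁⟩ := h₁
  obtain ⟨E₂, D₂, a₂, b₂, c₂, hT₂, hE₂, v₂⟩ := h₂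
  set m₀ : E₂⟦(-1 : ℤ)⟧ ⟶ F₂⟦(-1 : ℤ)⟧ := (shiftFunctor T (-1 : ℤ)).map a₂ with hm₀
  have hub : (m₀ ≫ f) ≫ b₁ = 0 := coprodZeroVan v₁ hE₂ (-1) le_rfl _
  obtain ⟨w, hw⟩ := Triangle.coyoneda_exact₂ _ hT₁ (m₀ ≫ f) hub
  simp only [Triangle.mk_mor₁, Triangle.mk_obj₁] at hw
  change E₂⟦(-1 : ℤ)⟧ ⟶ E₁ at w
  replace hw : m₀ ≫ f = w ≫ a₁ := hw
  obtain ⟨E, p, q, hTE⟩ := distinguished_cocone_triangle w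
  obtain ⟨c, comm₂, comm₃⟩ := complete_distinguished_triangle_morphism
    (Triangle.mk w p q) (Triangle.mk f g h) hTE hTr m₀ a₁ hw.symm
  change E ⟶ F at c
  obtain ⟨D, d, e, hTD⟩ := distinguished_cocone_triangle c
  simp only [Triangle.mk_obj₁, Triangle.mk_obj₂, Triangle.mk_obj₃,
    Triangle.mk_mor₁, Triangle.mk_mor₂, Triangle.mk_mor₃] at comm₂ comm₃
  replace comm₂ : p ≫ c = a₁ ≫ g := comm₂
  replace comm₃ : q ≫ (shiftFunctor T (1 : ℤ)).map m₀ = c ≫ h := comm₃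
  have hhf : h ≫ (shiftFunctor T (1 : ℤ)).map f = 0 := by
    exact comp_distTriang_mor_zero₃₁ _ hTr
  have hec : e ≫ (shiftFunctor T (1 : ℤ)).map c = 0 := by
    exact comp_distTriang_mor_zero₃₁ _ hTD
  have hcd : c ≫ d = 0 := by exact comp_distTriang_mor_zero₁₂ _ hTD
  have hwp : w ≫ p = 0 := by exact comp_distTriang_mor_zero₁₂ _ hTE
  refine ⟨E, D, c, d, e, hTD, ?_, ?_⟩
  · -- `E ∈ C⁰`
    intro S hS
    exact hS.2.2.1 (Triangle.mk w p q).rotate (rot_of_distTriang _ hTE)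
      (hE₁ S hS) (hS.2.1 E₂ _ (hE₂ S hS) (shiftNegShift E₂ (1 : ℤ)).symm)
  · -- the vanishing condition for `D`
    intro j hj φ
    have vD1 : ∀ ψ : G⟦j⟧ ⟶ D₁, ψ = 0 := v₁ j hj
    have vD2s : ∀ ψ : G⟦j⟧ ⟶ ((D₂⟦(-1 : ℤ)⟧)⟦(1 : ℤ)⟧), ψ = 0 :=
      vanOfIso v₂ (shiftNegShift D₂ (1 : ℤ)) j hj
    have vD2s2 : ∀ ψ : G⟦j⟧ ⟶ ((((D₂⟦(-1 : ℤ)⟧)⟦(1 : ℤ)⟧)⟦(1 : ℤ)⟧)⟦(-1 : ℤ)⟧), ψ = 0 :=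
      vanOfIso v₂ ((shiftShiftNeg ((D₂⟦(-1 : ℤ)⟧)⟦(1 : ℤ)⟧) (1 : ℤ)) ≪≫
        shiftNegShift D₂ (1 : ℤ)) j hj
    -- the shifted triangle `E₂⟦-1⟧⟦1⟧ ⟶ F₂⟦-1⟧⟦1⟧ ⟶ D₂⟦-1⟧⟦1⟧`
    set T₂s := (Triangle.shiftFunctor T (1 : ℤ)).obj
      ((Triangle.shiftFunctor T (-1 : ℤ)).obj (Triangle.mk a₂ b₂ c₂)) with hT₂s
    have hT₂sd : T₂s ∈ distTriang T :=
      Triangle.shift_distinguished _ (Triangle.shift_distinguished _ hT₂ (-1)) 1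
    have hmor₁ : T₂s.mor₁ = (shiftFunctor T (1 : ℤ)).map m₀ := by
      show (1 : ℤ).negOnePow • ((shiftFunctor T (1 : ℤ)).map
        ((-1 : ℤ).negOnePow • (shiftFunctor T (-1 : ℤ)).map a₂)) = _
      rw [Functor.map_units_smul, smul_smul, ← Int.negOnePow_add, ← hm₀]
      norm_num
    -- injectivity through `a₁⟦1⟧`
    have inj₁ : ∀ x : G⟦j⟧ ⟶ (E₁⟦(1 : ℤ)⟧), x ≫ (shiftFunctor T (1 : ℤ)).map a₁ = 0 →
        x = 0 := by
      intro x hx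
      obtain ⟨gg, hgg⟩ := Triangle.coyoneda_exact₃ _ (rot_of_distTriang _ hT₁) x
        (by show x ≫ (-((shiftFunctor T (1 : ℤ)).map a₁)) = 0
            rw [Preadditive.comp_neg, hx, neg_zero])
      rw [hgg, show gg = 0 from vD1 gg]
      exact zero_comp
    -- surjectivity through `m₀⟦1⟧`
    have surj₂ : ∀ z : G⟦j⟧ ⟶ ((F₂⟦(-1 : ℤ)⟧)⟦(1 : ℤ)⟧),
        ∃ y : G⟦j⟧ ⟶ ((E₂⟦(-1 : ℤ)⟧)⟦(1 : ℤ)⟧),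
          z = y ≫ (shiftFunctor T (1 : ℤ)).map m₀ := by
      intro z
      obtain ⟨y, hy⟩ := Triangle.coyoneda_exact₂ _ hT₂sd z (vD2s _)
      exact ⟨y, by rwa [hmor₁] at hy⟩
    -- injectivity through `m₀⟦1⟧⟦1⟧`
    have inj₂ : ∀ x : G⟦j⟧ ⟶ (((E₂⟦(-1 : ℤ)⟧)⟦(1 : ℤ)⟧)⟦(1 : ℤ)⟧),
        x ≫ (shiftFunctor T (1 : ℤ)).map ((shiftFunctor T (1 : ℤ)).map m₀) = 0 → x = 0 := by
      intro x hx
      obtain ⟨gg, hgg⟩ := Triangle.coyoneda_exact₂ _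
        (inv_rot_of_distTriang _ (Triangle.shift_distinguished _ hT₂sd 1)) x
        (by show x ≫ ((1 : ℤ).negOnePow • (shiftFunctor T (1 : ℤ)).map T₂s.mor₁) = 0
            have hx' : x ≫ (shiftFunctor T (1 : ℤ)).map T₂s.mor₁ = 0 :=
              (congrArg (fun k => x ≫ (shiftFunctor T (1 : ℤ)).map k) hmor₁).trans hx
            exact (Linear.comp_units_smul _ _ _).trans
              ((congrArg (fun k => (1 : ℤ).negOnePow • k) hx').trans (smul_zero _)))
      rw [hgg, show gg = 0 from vD2s2 gg]
      exact zero_comp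
    -- `Hom(G⟦j⟧, E) ⟶ Hom(G⟦j⟧, F)` is surjective
    have surjc : ∀ χ : G⟦j⟧ ⟶ F, ∃ t : G⟦j⟧ ⟶ E, χ = t ≫ c := by
      intro χ
      obtain ⟨y, hy⟩ := surj₂ (χ ≫ h)
      have hyw : y ≫ (shiftFunctor T (1 : ℤ)).map w = 0 := by
        apply inj₁
        have e2 : (y ≫ (shiftFunctor T (1 : ℤ)).map w) ≫ (shiftFunctor T (1 : ℤ)).map a₁ =
            (χ ≫ h) ≫ (shiftFunctor T (1 : ℤ)).map f := by
          rw [hy]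
          simp only [Category.assoc, ← Functor.map_comp]
          rw [hw]
        rw [e2, Category.assoc, hhf, Limits.comp_zero]
      obtain ⟨t, ht⟩ := Triangle.coyoneda_exact₃ _ (rot_of_distTriang _ hTE) y
        (by show y ≫ (-((shiftFunctor T (1 : ℤ)).map w)) = 0
            rw [Preadditive.comp_neg, hyw, neg_zero])
      simp only [Triangle.rotate_mor₂, Triangle.mk_mor₃] at ht
      change G⟦j⟧ ⟶ E at t
      replace ht : y = t ≫ q := ht
      have hdiff : (χ - t ≫ c) ≫ h = 0 := by
        rw [Preadditive.sub_comp, hy, ht, Category.assoc, Category.assoc, ← comm₃, sub_self]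
      obtain ⟨s, hs⟩ := Triangle.coyoneda_exact₃ _ hTr (χ - t ≫ c) hdiff
      simp only [Triangle.mk_mor₂] at hs
      change G⟦j⟧ ⟶ F₁ at s
      replace hs : χ - t ≫ c = s ≫ g := hs
      obtain ⟨r, hr⟩ := Triangle.coyoneda_exact₂ _ hT₁ s (vD1 _)
      simp only [Triangle.mk_mor₁] at hr
      change G⟦j⟧ ⟶ E₁ at r
      replace hr : s = r ≫ a₁ := hr
      refine ⟨t + r ≫ p, ?_⟩
      have h5 : χ - t ≫ c = (r ≫ p) ≫ c := by
        rw [hs, hr, Category.assoc, Category.assoc, comm₂]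
      rw [Preadditive.add_comp, ← h5]
      abel
    -- `φ ≫ e = 0`
    have ψzero : φ ≫ e = 0 := by
      have hψc : (φ ≫ e) ≫ (shiftFunctor T (1 : ℤ)).map c = 0 := by
        rw [Category.assoc, hec, Limits.comp_zero]
      have hψq : (φ ≫ e) ≫ (shiftFunctor T (1 : ℤ)).map q = 0 := by
        apply inj₂
        have e1 : ((φ ≫ e) ≫ (shiftFunctor T (1 : ℤ)).map q) ≫
              (shiftFunctor T (1 : ℤ)).map ((shiftFunctor T (1 : ℤ)).map m₀) =
            ((φ ≫ e) ≫ (shiftFunctor T (1 : ℤ)).map c) ≫ (shiftFunctor T (1 : ℤ)).map h := by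
          simp only [Category.assoc, ← Functor.map_comp]
          rw [comm₃]
        rw [e1, hψc, zero_comp]
      obtain ⟨σ₀, hσ₀⟩ := Triangle.coyoneda_exact₁ _
        (rot_of_distTriang _ (rot_of_distTriang _ hTE)) (φ ≫ e) hψq
      simp only [Triangle.rotate_mor₃, Triangle.rotate_mor₁, Triangle.mk_mor₂,
        Triangle.rotate_obj₁, Triangle.mk_obj₂] at hσ₀
      change G⟦j⟧ ⟶ E₁⟦(1 : ℤ)⟧ at σ₀
      replace hσ₀ : φ ≫ e = σ₀ ≫ (-((shiftFunctor T (1 : ℤ)).map p)) := hσ₀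
      have hσ : φ ≫ e = (-σ₀) ≫ (shiftFunctor T (1 : ℤ)).map p := by
        rw [hσ₀, Preadditive.comp_neg, Preadditive.neg_comp]
      set σ : G⟦j⟧ ⟶ (E₁⟦(1 : ℤ)⟧) := -σ₀ with hσdef
      have hτg : (σ ≫ (shiftFunctor T (1 : ℤ)).map a₁) ≫ (shiftFunctor T (1 : ℤ)).map g
          = 0 := by
        simp only [Category.assoc, ← Functor.map_comp]
        rw [← comm₂, Functor.map_comp, ← Category.assoc, ← hσ, hψc]
      obtain ⟨υ₀, hυ₀⟩ := Triangle.coyoneda_exact₂ _ (Triangle.shift_distinguished _ hTr 1)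
        (σ ≫ (shiftFunctor T (1 : ℤ)).map a₁)
        (by show (σ ≫ (shiftFunctor T (1 : ℤ)).map a₁) ≫
              ((1 : ℤ).negOnePow • (shiftFunctor T (1 : ℤ)).map g) = 0
            rw [Linear.comp_units_smul, hτg, smul_zero])
      change G⟦j⟧ ⟶ ((F₂⟦(-1 : ℤ)⟧)⟦(1 : ℤ)⟧) at υ₀
      replace hυ₀ : σ ≫ (shiftFunctor T (1 : ℤ)).map a₁ =
          υ₀ ≫ ((1 : ℤ).negOnePow • (shiftFunctor T (1 : ℤ)).map f) := hυ₀
      have hυ : σ ≫ (shiftFunctor T (1 : ℤ)).map a₁ =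
          ((1 : ℤ).negOnePow • υ₀) ≫ (shiftFunctor T (1 : ℤ)).map f := by
        rw [hυ₀]
        show υ₀ ≫ ((1 : ℤ).negOnePow • (shiftFunctor T (1 : ℤ)).map f) = _
        rw [Linear.comp_units_smul, Linear.units_smul_comp]
      obtain ⟨ν, hν⟩ := surj₂ ((1 : ℤ).negOnePow • υ₀)
      have key : (σ - ν ≫ (shiftFunctor T (1 : ℤ)).map w) ≫
          (shiftFunctor T (1 : ℤ)).map a₁ = 0 := by
        rw [Preadditive.sub_comp, hυ, hν]
        simp only [Category.assoc, ← Functor.map_comp]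
        rw [hw, sub_self]
      have hσν : σ = ν ≫ (shiftFunctor T (1 : ℤ)).map w := by
        have h6 := inj₁ _ key
        rwa [sub_eq_zero] at h6
      rw [hσ, hσν, Category.assoc, ← Functor.map_comp, hwp,
        Functor.map_zero, Limits.comp_zero]
    obtain ⟨χ, hχ⟩ := Triangle.coyoneda_exact₃ _ hTD φ ψzero
    simp only [Triangle.mk_mor₂] at hχ
    change G⟦j⟧ ⟶ F at χ
    replace hχ : φ = χ ≫ d := hχ
    obtain ⟨t, ht⟩ := surjc χ
    rw [hχ, ht, Category.assoc, hcd]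
    exact Limits.comp_zero
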